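/- Let (y_k)_{k∈ℕ} be a sequence in H. Suppose that for every weak sequential cluster point z of (y_k), the limit lim_{k→∞} ‖y_k − z‖ exists (i.e., there is q ∈ ℝ with ‖y_k − z‖ → q). Then (y_k) has at most one weak sequential cluster point; that is, if z₁ and z₂ are both weak sequential cluster points of (y_k), then z₁ = z₂. -/

import Mathlib

open Filter InnerProductSpace

/-- `z` is a weak sequential cluster point of the sequence `y`: some subsequence of `y`
converges weakly to `z`. -/
def WSeqClusterPt {H : Type*} [NormedAddCommGroup H] [InnerProductSpace ℝ H]
    (y : ℕ → H) (z : H) : Prop :=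
  ∃ φ : ℕ → ℕ, StrictMono φ ∧
    ∀ w : H, Tendsto (fun k => ⟪y (φ k), w⟫_ℝ) atTop (nhds ⟪z, w⟫_ℝ)

/-- Proposition 2.7: if for every weak sequential cluster point `z` of `(y k)` the limit
`lim ‖y k - z‖` exists, then `(y k)` has at most one weak sequential cluster point. -/
theorem stmt4 {H : Type*} [NormedAddCommGroup H] [InnerProductSpace ℝ H] [CompleteSpace H]
    (y : ℕ → H)
    (hlim : ∀ z : H, WSeqClusterPt y z →
      ∃ q : ℝ, Tendsto (fun k => ‖y k - z‖) atTop (nhds q))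
    (z₁ z₂ : H) (h₁ : WSeqClusterPt y z₁) (h₂ : WSeqClusterPt y z₂) :
    z₁ = z₂ := by
  obtain ⟨q₁, hq₁⟩ := hlim z₁ h₁
  obtain ⟨q₂, hq₂⟩ := hlim z₂ h₂
  obtain ⟨φ₁, hφ₁, hw₁⟩ := h₁
  obtain ⟨φ₂, hφ₂, hw₂⟩ := h₂
  set v := z₁ - z₂ with hv
  have hf : Tendsto (fun k => ‖y k - z₁‖ ^ 2 - ‖y k - z₂‖ ^ 2) atTop
      (nhds (q₁ ^ 2 - q₂ ^ 2)) := (hq₁.pow 2).sub (hq₂.pow 2)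
  have key : ∀ k, ‖y k - z₁‖ ^ 2 - ‖y k - z₂‖ ^ 2 =
      -2 * ⟪y k, v⟫_ℝ + (‖z₁‖ ^ 2 - ‖z₂‖ ^ 2) := by
    intro k
    have h1 := @norm_sub_sq_real H _ _ (y k) z₁
    have h2 := @norm_sub_sq_real H _ _ (y k) z₂
    rw [h1, h2, hv, inner_sub_right]
    ring
  have limA : ∀ (φ : ℕ → ℕ), StrictMono φ →
      Tendsto (fun k => -2 * ⟪y (φ k), v⟫_ℝ + (‖z₁‖ ^ 2 - ‖z₂‖ ^ 2)) atTop
        (nhds (q₁ ^ 2 - q₂ ^ 2)) := by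
    intro φ hφ
    have := hf.comp hφ.tendsto_atTop
    simpa [Function.comp_def, key] using this
  have e1 : q₁ ^ 2 - q₂ ^ 2 = -2 * ⟪z₁, v⟫_ℝ + (‖z₁‖ ^ 2 - ‖z₂‖ ^ 2) :=
    tendsto_nhds_unique (limA φ₁ hφ₁) (((hw₁ v).const_mul (-2)).add_const _)
  have e2 : q₁ ^ 2 - q₂ ^ 2 = -2 * ⟪z₂, v⟫_ℝ + (‖z₁‖ ^ 2 - ‖z₂‖ ^ 2) :=
    tendsto_nhds_unique (limA φ₂ hφ₂) (((hw₂ v).const_mul (-2)).add_const _)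
  have hiv : ⟪v, v⟫_ℝ = 0 := by
    rw [hv, inner_sub_left]
    linarith
  have : v = 0 := inner_self_eq_zero.mp hiv
  rw [hv] at this
  exact sub_eq_zero.mp this
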